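/- arXiv:2312.13973 — 4 statements merged into one kernel-verified Lean document; each statement's English description precedes it below -/
import Mathlib

section
/- If there exists an uncountable Δ-set X ⊆ 2^ω, then there exists an uncountable strong Δ-set, i.e., an uncountable set Y ⊆ 2^ω such that for every r ∈ ℕ the finite power Y^{r+1}, viewed as a subspace of (2^ω)^{r+1} with the product topology, is a Δ-set. -/
/-- The Cantor space `2^ω`. -/
abbrev Cantor : Type := ℕ → Bool

/-- A sequence of sets is *vanishing* if it is decreasing and has empty intersection. -/
def Vanishing {α : Type*} (F : ℕ → Set α) : Prop :=
  (∀ n, F (n + 1) ⊆ F n) ∧ (⋂ n, F n) = ∅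

/-- An uncountable subset `X` of a topological space is a *Δ-set* if every vanishing
sequence of subsets of `X` admits a vanishing expansion by relatively open sets. -/
def IsDeltaSet {α : Type*} [TopologicalSpace α] (X : Set α) : Prop :=
  ¬ X.Countable ∧
    ∀ F : ℕ → Set X, Vanishing F →
      ∃ U : ℕ → Set X, (∀ n, IsOpen (U n)) ∧ Vanishing U ∧ ∀ n, F n ⊆ U n

namespace StrongDeltaAux

open Set

/-- Ambient-open formulation of the Δ-expansion property. -/
def DProp {α : Type*} [TopologicalSpace α] (S : Set α) : Prop :=
  ∀ F : ℕ → Set α, (∀ n, F n ⊆ S) → (∀ n, F (n + 1) ⊆ F n) → (⋂ n, F n) = ∅ →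
    ∃ U : ℕ → Set α, (∀ n, IsOpen (U n)) ∧ (∀ n, F n ⊆ U n) ∧
      (∀ n, U (n + 1) ⊆ U n) ∧ (⋂ n, U n) ∩ S = ∅

lemma anti {α : Type*} {G : ℕ → Set α} (h : ∀ n, G (n + 1) ⊆ G n) : Antitone G :=
  antitone_nat_of_succ_le h

/-- The subtype formulation of the Δ-expansion property implies the ambient one. -/
lemma dprop_of_subtype {α : Type*} [TopologicalSpace α] {S : Set α}
    (hS : ∀ F : ℕ → Set S, Vanishing F →
      ∃ U : ℕ → Set S, (∀ n, IsOpen (U n)) ∧ Vanishing U ∧ ∀ n, F n ⊆ U n) :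
    DProp S := by
  intro F hFS hFdec hFempty
  set F' : ℕ → Set S := fun n => Subtype.val ⁻¹' F n with hF'
  have hvan : Vanishing F' := by
    constructor
    · exact fun n => Set.preimage_mono (hFdec n)
    · rw [hF']
      simp only [← Set.preimage_iInter, hFempty, Set.preimage_empty]
  obtain ⟨U', hU'open, ⟨hU'dec, hU'empty⟩, hU'F⟩ := hS F' hvan
  choose V hVopen hVeq using fun n => isOpen_induced_iff.mp (hU'open n)
  refine ⟨fun n => ⋂ m ∈ Set.Iic n, V m, ?_, ?_, ?_, ?_⟩
  · exact fun n => (Set.finite_Iic n).isOpen_biInter fun m _ => hVopen m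
  · intro n z hz
    have hzS : z ∈ S := hFS n hz
    refine Set.mem_iInter₂.2 fun m hm => ?_
    have h1 : (⟨z, hzS⟩ : S) ∈ F' m := anti (fun k => Set.preimage_mono (hFdec k)) hm hz
    have h2 := hU'F m h1
    rw [← hVeq m] at h2
    exact h2
  · intro n z hz
    exact Set.mem_iInter₂.2 fun m hm => Set.mem_iInter₂.1 hz m (hm.trans (Nat.le_succ n))
  · rw [Set.eq_empty_iff_forall_notMem]
    rintro z ⟨hz1, hz2⟩
    have : (⟨z, hz2⟩ : S) ∈ ⋂ n, U' n := by
      refine Set.mem_iInter.2 fun n => ?_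
      have : z ∈ V n := Set.mem_iInter₂.1 (Set.mem_iInter.1 hz1 n) n (Set.mem_Iic.2 le_rfl)
      rw [← hVeq n]
      exact this
    rw [hU'empty] at this
    exact this

/-- The ambient Δ-expansion property implies the subtype formulation. -/
lemma subtype_of_dprop {α : Type*} [TopologicalSpace α] {S : Set α} (hS : DProp S) :
    ∀ F : ℕ → Set S, Vanishing F →
      ∃ U : ℕ → Set S, (∀ n, IsOpen (U n)) ∧ Vanishing U ∧ ∀ n, F n ⊆ U n := by
  intro F ⟨hFdec, hFempty⟩
  have hempty : (⋂ n, Subtype.val '' F n) = (∅ : Set α) := by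
    rw [← (Subtype.val_injective.injOn).image_iInter_eq, hFempty, Set.image_empty]
  obtain ⟨U, hUopen, hUF, hUdec, hUempty⟩ := hS (fun n => Subtype.val '' F n)
    (fun n => Subtype.coe_image_subset S (F n))
    (fun n => Set.image_mono (hFdec n)) hempty
  refine ⟨fun n => Subtype.val ⁻¹' U n, fun n => (hUopen n).preimage continuous_subtype_val,
    ⟨fun n => Set.preimage_mono (hUdec n), ?_⟩, fun n z hz => hUF n ⟨z, hz, rfl⟩⟩
  rw [Set.eq_empty_iff_forall_notMem]
  intro z hz
  have : (z : α) ∈ (⋂ n, U n) ∩ S :=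
    ⟨Set.mem_iInter.2 fun n => Set.mem_iInter.1 hz n, z.2⟩
  rw [hUempty] at this
  exact this

/-- Δ-expansion property is preserved by continuous maps that are injective on the source. -/
lemma dprop_of_continuous_injOn {α β : Type*} [TopologicalSpace α] [TopologicalSpace β]
    {g : α → β} (hg : Continuous g) {T : Set α} {S : Set β}
    (hmaps : ∀ z ∈ T, g z ∈ S) (hinj : Set.InjOn g T) (hS : DProp S) : DProp T := by
  intro F hFT hFdec hFempty
  have hinj' : Set.InjOn g (⋃ n, F n) := hinj.mono (Set.iUnion_subset hFT)
  have hFim : ∀ n, g '' F n ⊆ S := fun n z ⟨w, hw, hwz⟩ => hwz ▸ hmaps w (hFT n hw)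
  have hFimdec : ∀ n, g '' F (n + 1) ⊆ g '' F n := fun n => Set.image_mono (hFdec n)
  have hFimempty : (⋂ n, g '' F n) = ∅ := by
    rw [← hinj'.image_iInter_eq, hFempty, Set.image_empty]
  obtain ⟨U, hUopen, hUF, hUdec, hUempty⟩ := hS _ hFim hFimdec hFimempty
  refine ⟨fun n => g ⁻¹' U n, fun n => (hUopen n).preimage hg,
    fun n z hz => hUF n ⟨z, hz, rfl⟩, fun n => Set.preimage_mono (hUdec n), ?_⟩
  rw [Set.eq_empty_iff_forall_notMem]
  rintro z ⟨hz1, hz2⟩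
  have : g z ∈ (⋂ n, U n) ∩ S :=
    ⟨Set.mem_iInter.2 fun n => Set.mem_iInter.1 hz1 n, hmaps z hz2⟩
  rw [hUempty] at this
  exact this

/-- A countable union of relatively closed subsets with the Δ-expansion property has the
Δ-expansion property (in a metrizable space). -/
lemma dprop_iUnion_closed {α : Type*} [TopologicalSpace α]
    [TopologicalSpace.PseudoMetrizableSpace α]
    {S : Set α} {C : ℕ → Set α} (hcover : S ⊆ ⋃ i, C i) (hsub : ∀ i, C i ⊆ S)
    (hcl : ∀ i, closure (C i) ∩ S ⊆ C i) (hC : ∀ i, DProp (C i)) : DProp S := by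
  letI : PseudoMetricSpace α := TopologicalSpace.pseudoMetrizableSpacePseudoMetric α
  intro F hFS hFdec hFempty
  have hWex : ∀ i, ∃ W : ℕ → Set α, (∀ n, IsOpen (W n)) ∧ (∀ n, F n ∩ C i ⊆ W n) ∧
      (∀ n, W (n + 1) ⊆ W n) ∧ (⋂ n, W n) ∩ C i = ∅ := by
    intro i
    refine hC i (fun n => F n ∩ C i) (fun n => Set.inter_subset_right)
      (fun n => Set.inter_subset_inter (hFdec n) subset_rfl) ?_
    have h1 : (⋂ n, F n ∩ C i) ⊆ ⋂ n, F n := Set.iInter_mono fun n => Set.inter_subset_left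
    rw [hFempty] at h1
    exact Set.subset_empty_iff.mp h1
  choose W hWopen hWF hWdec hWempty using hWex
  set A : ℕ → ℕ → Set α := fun i n =>
    W i n ∩ Metric.thickening (1 / (n + 1) : ℝ) (C i) ∩ ⋂ j ∈ Set.Iio i, (closure (C j))ᶜ
    with hA
  have hAopen : ∀ i n, IsOpen (A i n) := by
    intro i n
    exact ((hWopen i n).inter Metric.isOpen_thickening).inter
      ((Set.finite_Iio i).isOpen_biInter fun j _ => isClosed_closure.isOpen_compl)
  have hAdec : ∀ i, ∀ n, A i (n + 1) ⊆ A i n := by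
    intro i n
    refine Set.inter_subset_inter (Set.inter_subset_inter (hWdec i n) ?_) subset_rfl
    refine Metric.thickening_mono ?_ _
    refine one_div_le_one_div_of_le (by positivity) (by push_cast; linarith)
  refine ⟨fun n => ⋃ i, A i n, fun n => isOpen_iUnion fun i => hAopen i n, ?_, ?_, ?_⟩
  · -- F n ⊆ U n
    intro n z hz
    classical
    have hzS : z ∈ S := hFS n hz
    have hex : ∃ i, z ∈ C i := Set.mem_iUnion.1 (hcover hzS)
    let i := Nat.find hex
    have hi : z ∈ C i := Nat.find_spec hex
    refine Set.mem_iUnion.2 ⟨i, ?_, ?_⟩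
    · exact ⟨hWF i n ⟨hz, hi⟩, Metric.self_subset_thickening (by positivity) _ hi⟩
    · refine Set.mem_iInter₂.2 fun j hj => ?_
      intro hclj
      exact Nat.find_min hex hj (hcl j ⟨hclj, hzS⟩)
  · -- decreasing
    exact fun n => Set.iUnion_mono fun i => hAdec i n
  · -- vanishing on S
    rw [Set.eq_empty_iff_forall_notMem]
    rintro z ⟨hzU, hzS⟩
    have hzn : ∀ n, ∃ i, z ∈ A i n := fun n => Set.mem_iUnion.1 (Set.mem_iInter.1 hzU n)
    choose I hI using hzn
    by_cases hbdd : ∃ j, ∀ n, I n ≤ j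
    · obtain ⟨j, hj⟩ := hbdd
      obtain ⟨i₀f, hfib⟩ := Finite.exists_infinite_fiber
        (fun n => (⟨I n, Nat.lt_succ_of_le (hj n)⟩ : Fin (j + 1)))
      have hMinf : Set.Infinite {n | I n = (i₀f : ℕ)} := by
        have h1 := Set.infinite_coe_iff.mp hfib
        refine h1.mono fun n hn => ?_
        have : (⟨I n, Nat.lt_succ_of_le (hj n)⟩ : Fin (j + 1)) = i₀f := hn
        exact congrArg Fin.val this
      set i₀ := (i₀f : ℕ)
      have hall : ∀ n, z ∈ A i₀ n := by
        intro n
        obtain ⟨m, hmM, hmn⟩ : ∃ m, I m = i₀ ∧ n ≤ m := by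
          by_contra h
          exact hMinf ((Set.finite_Iio n).subset fun m hmM =>
            not_le.1 fun hle => h ⟨m, hmM, hle⟩)
        have := hI m
        rw [hmM] at this
        exact anti (hAdec i₀) hmn this
      have hzcl : z ∈ closure (C i₀) := by
        rw [Metric.closure_eq_iInter_thickening]
        refine Set.mem_iInter₂.2 fun δ hδ => ?_
        obtain ⟨n, hn⟩ := exists_nat_one_div_lt hδ
        exact Metric.thickening_mono hn.le _ ((hall n).1.2)
      have hzC : z ∈ C i₀ := hcl i₀ ⟨hzcl, hzS⟩
      have : z ∈ (⋂ n, W i₀ n) ∩ C i₀ :=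
        ⟨Set.mem_iInter.2 fun n => (hall n).1.1, hzC⟩
      rw [hWempty i₀] at this
      exact this
    · push_neg at hbdd
      have hnotin : ∀ j, z ∉ C j := by
        intro j hzj
        obtain ⟨n, hn⟩ := hbdd j
        have h3 := (hI n).2
        have := Set.mem_iInter₂.1 h3 j hn
        exact this (subset_closure hzj)
      obtain ⟨i, hi⟩ := Set.mem_iUnion.1 (hcover hzS)
      exact hnotin i hi

/-! ### Coding machinery on Cantor space -/

/-- Column 0 of a point of Cantor space. -/
def xproj (y : Cantor) : Cantor := fun n => y (Nat.pair 0 n)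

/-- Column `m+1` of a point of Cantor space. -/
def proj (m : ℕ) (y : Cantor) : Cantor := fun n => y (Nat.pair (m + 1) n)

lemma continuous_xproj : Continuous xproj :=
  continuous_pi fun n => continuous_apply (Nat.pair 0 n)

lemma continuous_proj (m : ℕ) : Continuous (proj m) :=
  continuous_pi fun n => continuous_apply (Nat.pair (m + 1) n)

section Build

variable {ι : Type*} [LinearOrder ι] [WellFoundedLT ι]

/-- Builds a transfinite sequence of Cantor points: `build x e b` codes `x b` in column 0,
and codes the earlier points `build x e (e b m)` in the later columns. -/
noncomputable def build (x : ι → Cantor) (e : ι → ℕ → ι) : ι → Cantor :=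
  (IsWellFounded.wf (α := ι) (r := (· < ·))).fix fun b rec => fun k =>
    if (Nat.unpair k).1 = 0 then x b (Nat.unpair k).2
    else if h : e b ((Nat.unpair k).1 - 1) < b then
      rec (e b ((Nat.unpair k).1 - 1)) h (Nat.unpair k).2
    else false

lemma build_eq (x : ι → Cantor) (e : ι → ℕ → ι) (b : ι) :
    build x e b = fun k =>
      if (Nat.unpair k).1 = 0 then x b (Nat.unpair k).2
      else if _h : e b ((Nat.unpair k).1 - 1) < b then
        build x e (e b ((Nat.unpair k).1 - 1)) (Nat.unpair k).2
      else false :=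
  WellFounded.fix_eq _ _ _

lemma xproj_build (x : ι → Cantor) (e : ι → ℕ → ι) (b : ι) :
    xproj (build x e b) = x b := by
  funext n
  rw [xproj, build_eq]
  simp [Nat.unpair_pair]

lemma proj_build (x : ι → Cantor) (e : ι → ℕ → ι) {b : ι} {m : ℕ} (h : e b m < b) :
    proj m (build x e b) = build x e (e b m) := by
  funext n
  rw [proj, build_eq]
  simp [Nat.unpair_pair, h]

end Build

/-- An index type of size `ℵ₁` whose initial segments are countable. -/
abbrev Idx : Type := (Cardinal.aleph 1 : Cardinal.{0}).ord.ToType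

end StrongDeltaAux

open StrongDeltaAux Set Cardinal Ordinal

/-- If there exists an uncountable Δ-set `X ⊆ 2^ω`, then there exists an uncountable
strong Δ-set, i.e. an uncountable `Y ⊆ 2^ω` all of whose finite powers `Y^(r+1)`,
viewed as subspaces of `(2^ω)^(r+1)`, are Δ-sets. -/
theorem exists_strong_delta_set_of_exists_delta_set
    (X : Set Cantor) (hX : IsDeltaSet X) :
    ∃ Y : Set Cantor, ¬ Y.Countable ∧
      ∀ r : ℕ, IsDeltaSet {g : Fin (r + 1) → Cantor | ∀ i, g i ∈ Y} := by
  classical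
  -- the ambient Δ-property of X
  have dX : DProp X := dprop_of_subtype hX.2
  -- an ℵ₁-sized well-ordered family inside X
  have hmkι : #Idx = aleph 1 := by rw [Idx, mk_toType, card_ord]
  have hemb : ∃ f : Idx ↪ ↥X, True := by
    have h1 : ¬ (#↥X ≤ ℵ₀) := fun h =>
      hX.1 (Set.countable_coe_iff.mp (Cardinal.mk_le_aleph0_iff.mp h))
    have h2 : aleph 1 ≤ #↥X := by
      rw [← Cardinal.succ_aleph0]
      exact Order.succ_le_of_lt (lt_of_not_ge h1)
    rw [← hmkι] at h2
    obtain ⟨f⟩ := Cardinal.le_def _ _ |>.mp h2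
    exact ⟨f, trivial⟩
  obtain ⟨f, -⟩ := hemb
  set x : Idx → Cantor := fun a => (f a : Cantor) with hxdef
  have hxinj : Function.Injective x := fun a b h => f.injective (Subtype.ext h)
  have hxX : ∀ a, x a ∈ X := fun a => (f a).2
  -- initial segments of Idx are countable
  have hIio : ∀ b : Idx, (Set.Iio b).Countable := by
    intro b
    have h2 := @Ordinal.typein_lt_type Idx (· < ·) isWellOrder_lt b
    rw [Ordinal.type_toType] at h2
    have h4 := Cardinal.lt_ord.mp h2
    have h5 := @Ordinal.card_typein Idx (· < ·) isWellOrder_lt b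
    rw [h5] at h4
    rw [Cardinal.countable_iff_lt_aleph_one]
    exact h4
  -- enumerations of initial segments
  have he : ∀ b : Idx, ∃ e : ℕ → Idx, ∀ a, a < b → ∃ m, e m = a := by
    intro b
    by_cases h : (Set.Iio b).Nonempty
    · obtain ⟨g, hg⟩ := (hIio b).exists_eq_range h
      refine ⟨g, fun a ha => ?_⟩
      have h6 : a ∈ Set.Iio b := ha
      rw [hg] at h6
      exact h6
    · exact ⟨fun _ => b, fun a ha => absurd ⟨a, ha⟩ h⟩
  choose e hesurj using he
  -- the coded family
  set y : Idx → Cantor := build x e with hy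
  set Y : Set Cantor := Set.range y with hY
  have hxy : ∀ b, xproj (y b) = x b := fun b => xproj_build x e b
  have hyinj : Function.Injective y := fun a b h => hxinj (by rw [← hxy, ← hxy, h])
  have hprojkey : ∀ a b : Idx, a < b → ∃ m, proj m (y b) = y a := by
    intro a b hab
    obtain ⟨m, hm⟩ := hesurj b a hab
    have hlt : e b m < b := by rw [hm]; exact hab
    exact ⟨m, by rw [hy, proj_build x e hlt, hm]⟩
  -- Y has the Δ-property
  have dY : DProp Y := by
    refine dprop_of_continuous_injOn continuous_xproj (g := xproj) (S := X) ?_ ?_ dX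
    · rintro z ⟨b, rfl⟩
      rw [hxy b]
      exact hxX b
    · rintro z ⟨b, rfl⟩ w ⟨c, rfl⟩ hzw
      rw [hxy, hxy] at hzw
      rw [hxinj hzw]
  -- Y is uncountable
  have hYunc : ¬ Y.Countable := by
    intro hc
    have h1 : Countable ↥Y := Set.countable_coe_iff.mpr hc
    have h2 : Countable Idx := Countable.of_equiv _ (Equiv.ofInjective y hyinj).symm
    have h3 : #Idx ≤ ℵ₀ := Cardinal.mk_le_aleph0_iff.mpr h2
    rw [hmkι] at h3
    exact absurd h3 (not_le.mpr Cardinal.aleph0_lt_aleph_one)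
  refine ⟨Y, hYunc, fun r => ?_⟩
  set S : Set (Fin (r + 1) → Cantor) := {g | ∀ i, g i ∈ Y} with hS
  -- S is uncountable
  have hSunc : ¬ S.Countable := by
    intro hc
    refine hYunc ?_
    have hconst : Function.Injective (fun (z : Cantor) => (fun _ => z : Fin (r + 1) → Cantor)) :=
      fun z w h => congrFun h ⟨0, Nat.succ_pos r⟩
    have : Y ⊆ (fun (z : Cantor) => (fun _ => z : Fin (r + 1) → Cantor)) ⁻¹' S :=
      fun z hz => fun _ => hz
    exact (hc.preimage hconst).mono this
  -- the countable family of closed graph pieces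
  set κ := (Fin (r + 1)) × (Fin (r + 1) → Option ℕ) with hκ
  obtain ⟨σ, hσ⟩ := exists_surjective_nat κ
  set pieceCond : κ → (Fin (r + 1) → Cantor) → Fin (r + 1) → Prop := fun p g j =>
    match p.2 j with
    | none => g j = g p.1
    | some m => g j = proj m (g p.1)
    with hpc
  set T : κ → Set (Fin (r + 1) → Cantor) := fun p =>
    S ∩ ⋂ j, {g | pieceCond p g j} with hT
  have hKclosed : ∀ p : κ, IsClosed (⋂ j, {g | pieceCond p g j}) := by
    intro p
    refine isClosed_iInter fun j => ?_
    rcases hv : p.2 j with - | m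
    · have : {g : Fin (r + 1) → Cantor | pieceCond p g j} = {g | g j = g p.1} := by
        ext g; simp only [hpc, Set.mem_setOf_eq, hv]
      rw [this]
      exact isClosed_eq (continuous_apply j) (continuous_apply p.1)
    · have : {g : Fin (r + 1) → Cantor | pieceCond p g j} = {g | g j = proj m (g p.1)} := by
        ext g; simp only [hpc, Set.mem_setOf_eq, hv]
      rw [this]
      exact isClosed_eq (continuous_apply j) ((continuous_proj m).comp (continuous_apply p.1))
  have hTsub : ∀ p, T p ⊆ S := fun p => Set.inter_subset_left
  have hTclosed : ∀ p : κ, closure (T p) ∩ S ⊆ T p := by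
    intro p z hz
    refine ⟨hz.2, ?_⟩
    have h1 : closure (T p) ⊆ ⋂ j, {g | pieceCond p g j} := by
      rw [← (hKclosed p).closure_eq]
      exact closure_mono Set.inter_subset_right
    exact h1 hz.1
  have hTd : ∀ p : κ, DProp (T p) := by
    intro p
    refine dprop_of_continuous_injOn (continuous_apply p.1) (g := fun g => g p.1)
      (S := Y) ?_ ?_ dY
    · exact fun z hz => hz.1 p.1
    · intro g hg g' hg' hgg
      have hgg' : g p.1 = g' p.1 := hgg
      funext j
      have h1 : pieceCond p g j := Set.mem_iInter.1 hg.2 j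
      have h2 : pieceCond p g' j := Set.mem_iInter.1 hg'.2 j
      rcases hv : p.2 j with - | m
      · rw [hpc] at h1 h2
        simp only [hv] at h1 h2
        rw [h1, h2, hgg']
      · rw [hpc] at h1 h2
        simp only [hv] at h1 h2
        rw [h1, h2, hgg']
  have hcover : S ⊆ ⋃ n, T (σ n) := by
    intro g hg
    choose a ha using fun i => (hg i : g i ∈ Y)
    obtain ⟨i₀, hmax⟩ := Finite.exists_max a
    have hm : ∀ j, a j < a i₀ → ∃ m, proj m (g i₀) = g j := by
      intro j hj
      obtain ⟨m, hm⟩ := hprojkey (a j) (a i₀) hj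
      exact ⟨m, by rw [ha, ha] at hm; exact hm⟩
    choose m hmspec using hm
    set v : Fin (r + 1) → Option ℕ := fun j =>
      if h : a j < a i₀ then some (m j h) else none with hv
    have hmem : g ∈ T (i₀, v) := by
      refine ⟨hg, Set.mem_iInter.2 fun j => ?_⟩
      show pieceCond (i₀, v) g j
      rw [hpc]
      by_cases h : a j < a i₀
      · simp only [hv, dif_pos h]
        exact (hmspec j h).symm
      · simp only [hv, dif_neg h]
        have : a j = a i₀ := le_antisymm (hmax j) (not_lt.1 h)
        rw [← ha j, ← ha i₀, this]
    obtain ⟨n, hn⟩ := hσ (i₀, v)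
    exact Set.mem_iUnion.2 ⟨n, by rw [hn]; exact hmem⟩
  have dS : DProp S :=
    dprop_iUnion_closed hcover (fun n => hTsub (σ n)) (fun n => hTclosed (σ n))
      (fun n => hTd (σ n))
  exact ⟨hSunc, subtype_of_dprop dS⟩
end

section
/- Let r ∈ ℕ, let i ≤ r, and let f ⊆ ω₁^{r+1} be an i-function into ω₁^r. Then there exists a countable collection B of subsets of ω₁ such that f is a countable intersection of finite unions of boxes with sides in B; that is, there exist natural numbers (m_l : l ∈ ℕ) and sets B^l_{j,j'} ∈ B (for l ∈ ℕ, j < m_l, j' ≤ r) such that f = ⋂_{l ∈ ℕ} ⋃_{j < m_l} ∏_{j' ≤ r} B^l_{j,j'}. -/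
open Cardinal


/-- The first uncountable ordinal `ω₁`, as a type. -/
abbrev Omega1 : Type := (Ordinal.omega.{0} 1).ToType

/-- A relation `f ⊆ ω₁^(r+1)` is an *`i`-function into `ω₁^r`* if for every `α ∈ ω₁`
there is exactly one `(r+1)`-tuple in `f` whose `i`-th coordinate is `α`. -/
def IsIFunction {r : ℕ} (i : Fin (r + 1)) (f : Set (Fin (r + 1) → Omega1)) : Prop :=
  ∀ α : Omega1, ∃! x : Fin (r + 1) → Omega1, x ∈ f ∧ x i = α

/-- Every `i`-function into `ω₁^r` is a countable intersection of finite unions of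
boxes with sides in some countable collection `B` of subsets of `ω₁`. -/
theorem iFunction_eq_inter_union_boxes (r : ℕ) (i : Fin (r + 1))
    (f : Set (Fin (r + 1) → Omega1)) (hf : IsIFunction i f) :
    ∃ B : Set (Set Omega1), B.Countable ∧
      ∃ m : ℕ → ℕ, ∃ C : ℕ → ℕ → Fin (r + 1) → Set Omega1,
        (∀ l j, j < m l → ∀ j' : Fin (r + 1), C l j j' ∈ B) ∧
        f = ⋂ l : ℕ, ⋃ j : ℕ, ⋃ (_ : j < m l),
          {x : Fin (r + 1) → Omega1 | ∀ j' : Fin (r + 1), x j' ∈ C l j j'} := by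
  classical
  -- an injection of ω₁ into the reals (Cantor space)
  obtain ⟨c, hc⟩ : ∃ c : Omega1 → ℕ → Bool, Function.Injective c := by
    have h : #Omega1 ≤ #(ℕ → Bool) := by
      rw [Cardinal.mk_toType, Ordinal.card_omega, Cardinal.mk_arrow]
      simp only [Cardinal.mk_bool, Cardinal.lift_two, Cardinal.mk_nat, Cardinal.lift_aleph0]
      rw [← Cardinal.continuum]
      exact Cardinal.aleph_one_le_continuum
    obtain ⟨e⟩ := h
    exact ⟨e, e.injective⟩
  -- the function `g : ω₁ → ω₁^{r+1}` whose graph (indexed by coordinate `i`) is `f`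
  set g : Omega1 → Fin (r + 1) → Omega1 := fun α => (hf α).choose with hgdef
  have hg1 : ∀ α, g α ∈ f ∧ g α i = α := fun α => (hf α).choose_spec.1
  have hg2 : ∀ α x, x ∈ f ∧ x i = α → x = g α := fun α x hx => (hf α).choose_spec.2 x hx
  have hmem : ∀ x : Fin (r + 1) → Omega1, x ∈ f ↔ ∀ k, x k = g (x i) k := by
    intro x
    constructor
    · intro hx k
      have := hg2 (x i) x ⟨hx, rfl⟩
      rw [← this]
    · intro h
      have : x = g (x i) := funext h
      rw [this]
      exact (hg1 (x i)).1
  -- decode `l` into a coordinate and a natural number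
  set jl : ℕ → Fin (r + 1) := fun l => ⟨l % (r + 1), Nat.mod_lt _ (Nat.succ_pos r)⟩ with hjl
  set nl : ℕ → ℕ := fun l => l / (r + 1) with hnl
  set b : ℕ → Bool := fun j => decide (j = 1) with hb
  set C : ℕ → ℕ → Fin (r + 1) → Set Omega1 := fun l j k =>
    {α | (k = jl l → c α (nl l) = b j) ∧ (k = i → c (g α (jl l)) (nl l) = b j)} with hC
  refine ⟨Set.range (fun p : ℕ × ℕ × Fin (r + 1) => C p.1 p.2.1 p.2.2),
    Set.countable_range _, fun _ => 2, C, fun l j _ k => ⟨(l, j, k), rfl⟩, ?_⟩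
  ext x
  simp only [Set.mem_iInter, Set.mem_iUnion, Set.mem_setOf_eq, hmem x]
  constructor
  · intro hx l
    refine ⟨(c (x (jl l)) (nl l)).toNat, ?_, fun k => ⟨?_, ?_⟩⟩
    · cases c (x (jl l)) (nl l) <;> simp
    · rintro rfl
      cases c (x (jl l)) (nl l) <;> simp [hb]
    · rintro rfl
      rw [← hx (jl l)]
      cases c (x (jl l)) (nl l) <;> simp [hb]
  · intro H k
    apply hc
    funext n
    obtain ⟨j, -, hcond⟩ := H (k.val + n * (r + 1))
    have hjlk : jl (k.val + n * (r + 1)) = k := by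
      apply Fin.ext
      simp [hjl, Nat.add_mul_mod_self_right, Nat.mod_eq_of_lt k.isLt]
    have hnln : nl (k.val + n * (r + 1)) = n := by
      simp [hnl, Nat.add_mul_div_right _ _ (Nat.succ_pos r), Nat.div_eq_of_lt k.isLt]
    have h1 := (hcond k).1 hjlk.symm
    have h2 := (hcond i).2 rfl
    rw [hnln] at h1
    rw [hjlk, hnln] at h2
    rw [h1, h2]
end

section
/- For every r ∈ ℕ there exists a countable family (f^i_n : n ∈ ℕ, i ≤ r) of relations on ω₁^{r+1}, where each f^i_n is an i-function into ω₁^r, such that ω₁^{r+1} = ⋃_{i ≤ r} ⋃_{n ∈ ℕ} f^i_n. -/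
lemma Omega1.countable_Iic (β : Omega1) : (Set.Iic β).Countable := by
  have h : (Set.Iio β).Countable := by
    rw [Cardinal.countable_iff_lt_aleph_one]
    have h1 := Ordinal.typein_lt_self β
    have h2 := lt_of_lt_of_eq h1 (Cardinal.ord_aleph 1).symm
    have h3 := Cardinal.lt_ord.1 h2
    have h4 := @Ordinal.card_typein Omega1 (· < ·) isWellOrder_lt β
    exact lt_of_eq_of_lt h4.symm h3
  have : Set.Iic β = Set.Iio β ∪ {β} := by
    ext x; simp [le_iff_lt_or_eq]
  rw [this]
  exact h.union (Set.countable_singleton β)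

/-- The set of `r`-tuples with all entries `≤ β` is countable and nonempty. -/
lemma Omega1.countable_tuples (r : ℕ) (β : Omega1) :
    {g : Fin r → Omega1 | ∀ j, g j ≤ β}.Countable ∧
      {g : Fin r → Omega1 | ∀ j, g j ≤ β}.Nonempty := by
  constructor
  · have : {g : Fin r → Omega1 | ∀ j, g j ≤ β} ⊆
        Set.pi Set.univ (fun _ : Fin r => Set.Iic β) := by
      intro g hg j _; exact hg j
    exact (Set.countable_univ_pi fun _ => Omega1.countable_Iic β).mono this
  · exact ⟨fun _ => β, fun _ => le_refl β⟩

/-- For every `r` there is a countable family `(f i n : n ∈ ℕ, i ≤ r)` of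
`i`-functions into `ω₁^r` whose union is all of `ω₁^(r+1)`. -/
theorem exists_countable_cover_by_iFunctions (r : ℕ) :
    ∃ f : Fin (r + 1) → ℕ → Set (Fin (r + 1) → Omega1),
      (∀ (i : Fin (r + 1)) (n : ℕ), IsIFunction i (f i n)) ∧
      (⋃ i : Fin (r + 1), ⋃ n : ℕ, f i n) = Set.univ := by
  -- enumeration of tuples below β
  have he : ∀ β : Omega1, ∃ e : ℕ → (Fin r → Omega1),
      (∀ n j, e n j ≤ β) ∧ ∀ g : Fin r → Omega1, (∀ j, g j ≤ β) → ∃ n, e n = g := by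
    intro β
    obtain ⟨hc, hne⟩ := Omega1.countable_tuples r β
    obtain ⟨e, he⟩ := (Set.countable_iff_exists_surjective hne).1 hc
    refine ⟨fun n => (e n : Fin r → Omega1), fun n => (e n).2, fun g hg => ?_⟩
    obtain ⟨n, hn⟩ := he ⟨g, hg⟩
    exact ⟨n, congrArg Subtype.val hn⟩
  choose e he1 he2 using he
  refine ⟨fun i n => {x | Fin.removeNth i x = e (x i) n}, ?_, ?_⟩
  · intro i n α
    refine ⟨Fin.insertNth i α (e α n), ⟨?_, ?_⟩, ?_⟩
    · simp [Fin.removeNth_insertNth, Fin.insertNth_apply_same]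
    · simp [Fin.insertNth_apply_same]
    · rintro x ⟨hx, rfl⟩
      conv_lhs => rw [← Fin.insertNth_self_removeNth i x, hx]
  · ext x
    simp only [Set.mem_iUnion, Set.mem_univ, iff_true]
    obtain ⟨i, -, hi⟩ := Finset.exists_max_image Finset.univ x ⟨0, Finset.mem_univ 0⟩
    obtain ⟨n, hn⟩ := he2 (x i) (Fin.removeNth i x) (fun j => hi _ (Finset.mem_univ _))
    exact ⟨i, n, hn.symm⟩
end

section
/- Let k ∈ ℕ and let X be an uncountable subset of (2^ω)^k with the subspace topology. Then X is a Δ-set if and only if every countable partition of X has a point-finite open expansion; that is, if and only if for every sequence (P_n : n ∈ ℕ) of pairwise disjoint (possibly empty) subsets of X with ⋃_n P_n = X, there exists a sequence (U_n : n ∈ ℕ) of relatively open subsets of X with P_n ⊆ U_n for all n which is point-finite, meaning every x ∈ X belongs to U_n for only finitely many n. -/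
/-- An uncountable `X ⊆ (2^ω)^k` is a Δ-set iff every countable partition of `X`
has a point-finite open expansion. -/
theorem isDeltaSet_iff_partition_pointfinite_expansion (k : ℕ)
    (X : Set (Fin k → Cantor)) (hX : ¬ X.Countable) :
    IsDeltaSet X ↔
      ∀ P : ℕ → Set X, (∀ m n, m ≠ n → P m ∩ P n = ∅) → (⋃ n, P n) = Set.univ →
        ∃ U : ℕ → Set X, (∀ n, IsOpen (U n)) ∧ (∀ n, P n ⊆ U n) ∧
          ∀ x : X, {n | x ∈ U n}.Finite := by
  constructor
  · rintro ⟨-, hD⟩ P hdisj hcov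
    set F : ℕ → Set X := fun n => ⋃ m, ⋃ (_ : n ≤ m), P m with hF
    have hVan : Vanishing F := by
      constructor
      · intro n x hx
        simp only [hF, Set.mem_iUnion] at hx ⊢
        obtain ⟨m, hm, hxm⟩ := hx
        exact ⟨m, le_trans (Nat.le_succ n) hm, hxm⟩
      · ext x
        simp only [Set.mem_iInter, Set.mem_empty_iff_false, iff_false]
        intro hx
        have hx0 : x ∈ ⋃ n, P n := by rw [hcov]; trivial
        obtain ⟨m0, hm0⟩ := Set.mem_iUnion.mp hx0
        have := hx (m0 + 1)
        simp only [hF, Set.mem_iUnion] at this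
        obtain ⟨m1, hm1, hxm1⟩ := this
        have : x ∈ P m0 ∩ P m1 := ⟨hm0, hxm1⟩
        rw [hdisj m0 m1 (by omega)] at this
        exact this
    obtain ⟨U, hUo, ⟨hUdec, hUint⟩, hFU⟩ := hD F hVan
    refine ⟨U, hUo, ?_, ?_⟩
    · intro n x hx
      exact hFU n (by simp only [hF, Set.mem_iUnion]; exact ⟨n, le_refl n, hx⟩)
    · intro x
      have : ∃ N, x ∉ U N := by
        by_contra h
        push_neg at h
        have : x ∈ ⋂ n, U n := Set.mem_iInter.mpr h
        rw [hUint] at this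
        exact this
      obtain ⟨N, hN⟩ := this
      have hanti : Antitone U := antitone_nat_of_succ_le hUdec
      apply Set.Finite.subset (Set.finite_Iio N)
      intro n hn
      simp only [Set.mem_setOf_eq] at hn
      by_contra hc
      simp only [Set.mem_Iio, not_lt] at hc
      exact hN (hanti hc hn)
  · intro h
    refine ⟨hX, ?_⟩
    rintro F ⟨hdec, hint⟩
    have hanti : Antitone F := antitone_nat_of_succ_le hdec
    set P : ℕ → Set X := fun n => Nat.rec (F 0)ᶜ (fun m _ => F m \ F (m + 1)) n with hP
    have hP0 : P 0 = (F 0)ᶜ := rfl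
    have hPs : ∀ m, P (m + 1) = F m \ F (m + 1) := fun m => rfl
    have hnotF : ∀ (x : X), ∃ n, x ∉ F n := by
      intro x
      by_contra hc
      push_neg at hc
      have : x ∈ ⋂ n, F n := Set.mem_iInter.mpr hc
      rw [hint] at this
      exact this
    have hdisj : ∀ m n, m ≠ n → P m ∩ P n = ∅ := by
      have key : ∀ m n, m < n → P m ∩ P n = ∅ := by
        intro m n hmn
        ext x
        simp only [Set.mem_inter_iff, Set.mem_empty_iff_false, iff_false, not_and]
        intro hxm hxn
        obtain ⟨n', rfl⟩ : ∃ n', n = n' + 1 := ⟨n - 1, by omega⟩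
        rw [hPs] at hxn
        cases m with
        | zero => rw [hP0] at hxm; exact hxm (hanti (Nat.zero_le _) hxn.1)
        | succ m' =>
          rw [hPs] at hxm
          exact hxm.2 (hanti (by omega) hxn.1)
      intro m n hmn
      rcases lt_or_gt_of_ne hmn with h1 | h1
      · exact key m n h1
      · rw [Set.inter_comm]; exact key n m h1
    classical
    have hcov : (⋃ n, P n) = Set.univ := by
      ext x
      simp only [Set.mem_iUnion, Set.mem_univ, iff_true]
      have hex := hnotF x
      set N := Nat.find hex with hN
      have hNspec : x ∉ F N := Nat.find_spec hex
      cases hcN : N with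
      | zero => exact ⟨0, by rw [hP0]; rw [hcN] at hNspec; exact hNspec⟩
      | succ m =>
        refine ⟨m + 1, ?_⟩
        rw [hPs]
        constructor
        · by_contra hc
          exact absurd (hN ▸ Nat.find_le hc) (by omega)
        · rw [hcN] at hNspec; exact hNspec
    obtain ⟨U, hUo, hPU, hfin⟩ := h P hdisj hcov
    refine ⟨fun n => ⋃ m, ⋃ (_ : n < m), U m, fun n => isOpen_iUnion fun m => isOpen_iUnion fun _ => hUo m, ⟨?_, ?_⟩, ?_⟩
    · intro n x hx
      simp only [Set.mem_iUnion] at hx ⊢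
      obtain ⟨m, hm, hxm⟩ := hx
      exact ⟨m, by omega, hxm⟩
    · ext x
      simp only [Set.mem_iInter, Set.mem_iUnion, Set.mem_empty_iff_false, iff_false]
      intro hc
      obtain ⟨N, hNb⟩ := (hfin x).bddAbove
      obtain ⟨m, hm, hxm⟩ := hc (N + 1)
      have : m ≤ N := hNb hxm
      omega
    · intro n x hx
      have hx' : x ∈ ⋃ j, P j := by rw [hcov]; trivial
      obtain ⟨j, hj⟩ := Set.mem_iUnion.mp hx'
      cases j with
      | zero =>
        rw [hP0] at hj
        exact absurd (hanti (Nat.zero_le n) hx) hj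
      | succ m =>
        rw [hPs] at hj
        have hnm : n < m + 1 := by
          by_contra hc
          exact hj.2 (hanti (by omega) hx)
        simp only [Set.mem_iUnion]
        exact ⟨m + 1, hnm, hPU (m + 1) hj⟩
end
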